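/- Let F be a forest on a finite vertex set V and let a,b,c,d be four pairwise distinct vertices with ab, cd ∈ E(F) and ac, bd ∉ E(F). If the edges ab and cd lie in different connected components of F, then the 2-switch of F at (a,b;c,d) is a forest. -/

import Mathlib

open SimpleGraph

/-- Four pairwise distinct vertices `a,b,c,d` with `ab, cd ∈ E(G)` and `ac, bd ∉ E(G)`:
the condition under which the 2-switch of `G` at `(a,b;c,d)` is performed. -/
def Switchable {V : Type*} (G : SimpleGraph V) (a b c d : V) : Prop :=
  a ≠ b ∧ a ≠ c ∧ a ≠ d ∧ b ≠ c ∧ b ≠ d ∧ c ≠ d ∧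
    G.Adj a b ∧ G.Adj c d ∧ ¬ G.Adj a c ∧ ¬ G.Adj b d

/-- The 2-switch of `G` at `(a,b;c,d)`: the graph on `V` with edge set
`(E(G) \ {ab, cd}) ∪ {ac, bd}`. -/
def twoSwitch {V : Type*} (G : SimpleGraph V) (a b c d : V) : SimpleGraph V :=
  SimpleGraph.fromEdgeSet ((G.edgeSet \ {s(a, b), s(c, d)}) ∪ {s(a, c), s(b, d)})

/-- `G'` is obtained from `G` by a 2-switch. -/
def ObtainedByTwoSwitch {V : Type*} (G G' : SimpleGraph V) : Prop :=
  ∃ a b c d : V, Switchable G a b c d ∧ G' = twoSwitch G a b c d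

lemma aux_isAcyclic_anti {V : Type*} {G H : SimpleGraph V} (hle : H ≤ G)
    (hG : G.IsAcyclic) : H.IsAcyclic := by
  intro v c hc
  exact hG (c.map (SimpleGraph.Hom.ofLE hle))
    (hc.map (fun _ _ h => h))

lemma aux_acyclic_sup_edge {V : Type*} {G : SimpleGraph V} {x y : V}
    (hG : G.IsAcyclic) (hr : ¬ G.Reachable x y) :
    (G ⊔ SimpleGraph.fromEdgeSet {s(x, y)}).IsAcyclic := by
  intro v c hc
  by_cases he : s(x, y) ∈ c.edges
  · have hadj := (adj_and_reachable_delete_edges_iff_exists_cycle).2 ⟨v, c, hc, he⟩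
    have hle : (G ⊔ SimpleGraph.fromEdgeSet {s(x, y)}) \ SimpleGraph.fromEdgeSet {s(x, y)} ≤ G := by
      intro u w huw
      rw [sdiff_adj, sup_adj] at huw
      tauto
    exact hr (hadj.2.mono hle)
  · have hsub : ∀ e ∈ c.edges, e ∈ G.edgeSet := by
      intro e hec
      have h1 := SimpleGraph.Walk.edges_subset_edgeSet c hec
      rw [edgeSet_sup, edgeSet_fromEdgeSet] at h1
      rcases h1 with h1 | h1
      · exact h1
      · exact absurd (h1.1 ▸ hec) he
    exact hG (c.transfer G hsub) (hc.transfer hsub)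

lemma aux_walk {V : Type*} {G : SimpleGraph V} {x y u v : V}
    (p : (G ⊔ SimpleGraph.fromEdgeSet {s(x, y)}).Walk u v) :
    ¬ G.Reachable u x → ¬ G.Reachable u y → G.Reachable u v := by
  induction p with
  | nil => exact fun _ _ => Reachable.refl _
  | @cons u w v hadj p ih =>
    intro hux huy
    simp only [sup_adj] at hadj
    rcases hadj with hG' | hE
    · have h1 : ¬ G.Reachable w x := fun h => hux ((hG'.reachable).trans h)
      have h2 : ¬ G.Reachable w y := fun h => huy ((hG'.reachable).trans h)
      exact (hG'.reachable).trans (ih h1 h2)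
    · rw [fromEdgeSet_adj, Set.mem_singleton_iff, Sym2.eq_iff] at hE
      rcases hE.1 with ⟨rfl, rfl⟩ | ⟨rfl, rfl⟩
      · exact absurd (Reachable.refl _) hux
      · exact absurd (Reachable.refl _) huy

/-- a 2-switch between edges lying in different connected components of a
forest yields a forest. -/
theorem stmt_2 {V : Type*} [Fintype V] (F : SimpleGraph V) (hF : F.IsAcyclic)
    (a b c d : V) (h : Switchable F a b c d) (hcomp : ¬ F.Reachable a c) :
    (twoSwitch F a b c d).IsAcyclic := by
  obtain ⟨hab, hac, had, hbc, hbd, hcd, hFab, hFcd, hnac, hnbd⟩ := h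
  set G1 := F \ SimpleGraph.fromEdgeSet {s(a, b), s(c, d)} with hG1def
  have hG1le : G1 ≤ F := sdiff_le
  have hG1 : G1.IsAcyclic := aux_isAcyclic_anti hG1le hF
  have hbridge : F.IsBridge s(a, b) := (isAcyclic_iff_forall_adj_isBridge.1 hF) hFab
  have hle1 : G1 ≤ F \ SimpleGraph.fromEdgeSet {s(a, b)} := by
    intro u w hw
    simp only [hG1def, sdiff_adj, fromEdgeSet_adj, Set.mem_insert_iff,
      Set.mem_singleton_iff] at hw ⊢
    tauto
  have hnba : ¬ G1.Reachable b a := fun hh => hbridge ((hh.mono hle1).symm)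
  have hnbc : ¬ G1.Reachable b c :=
    fun hh => hcomp ((hFab.reachable).trans (hh.mono hG1le))
  have hnG1ac : ¬ G1.Reachable a c := fun hh => hcomp (hh.mono hG1le)
  set G2 := G1 ⊔ SimpleGraph.fromEdgeSet {s(a, c)} with hG2def
  have hG2 : G2.IsAcyclic := aux_acyclic_sup_edge hG1 hnG1ac
  have hnG2bd : ¬ G2.Reachable b d := by
    intro hh
    have h1 : G1.Reachable b d := aux_walk hh.some hnba hnbc
    exact hcomp ((hFab.reachable).trans ((h1.mono hG1le).trans (hFcd.symm.reachable)))
  have hG3 : (G2 ⊔ SimpleGraph.fromEdgeSet {s(b, d)}).IsAcyclic :=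
    aux_acyclic_sup_edge hG2 hnG2bd
  have key : twoSwitch F a b c d = G2 ⊔ SimpleGraph.fromEdgeSet {s(b, d)} := by
    ext u w
    have hne : F.Adj u w → u ≠ w := Adj.ne
    simp only [twoSwitch, hG2def, hG1def, fromEdgeSet_adj, sup_adj, sdiff_adj,
      Set.mem_union, Set.mem_diff, Set.mem_insert_iff, Set.mem_singleton_iff, mem_edgeSet]
    tauto
  rw [key]
  exact hG3
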